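/- Let δ > 0 and p ∈ G(δ). Then the open two-sided cone 𝒞_p with vertex p is disjoint from G(δ): 𝒞_p ∩ G(δ) = ∅. -/

import Mathlib

open Metric Set

noncomputable section

/-- `ℝ^n` with the Euclidean norm. -/
abbrev Euc (n : ℕ) := EuclideanSpace ℝ (Fin n)

/-- The space `ℝ^{d-1} × ℝ` equipped with the Euclidean (l²) product distance. -/
abbrev Pt (d : ℕ) := WithLp 2 (Euc (d - 1) × ℝ)

/-- The point `(x, y) ∈ ℝ^{d-1} × ℝ`. -/
def toPt (d : ℕ) (x : Euc (d - 1)) (y : ℝ) : Pt d :=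
  (WithLp.equiv 2 (Euc (d - 1) × ℝ)).symm (x, y)

/-- First (horizontal) component of a point of `ℝ^{d-1} × ℝ`. -/
def fstPt (d : ℕ) (p : Pt d) : Euc (d - 1) := (WithLp.equiv 2 (Euc (d - 1) × ℝ) p).1

/-- Second (vertical) component of a point of `ℝ^{d-1} × ℝ`. -/
def sndPt (d : ℕ) (p : Pt d) : ℝ := (WithLp.equiv 2 (Euc (d - 1) × ℝ) p).2

/-- `F̂`, the graph of `f` over the ball `B̂` of radius `R`. -/
def graphF (d : ℕ) (f : Euc (d - 1) → ℝ) (R : ℝ) : Set (Pt d) :=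
  (fun x => toPt d x (f x)) '' Metric.ball (0 : Euc (d - 1)) R

/-- `G(δ)`: points above the graph, over the smaller ball `B` of radius `r`, whose
Euclidean distance to the graph `F̂` equals `δ`. -/
def GSet (d : ℕ) (f : Euc (d - 1) → ℝ) (R r δ : ℝ) : Set (Pt d) :=
  { p | fstPt d p ∈ Metric.ball (0 : Euc (d - 1)) r ∧ f (fstPt d p) < sndPt d p ∧
        Metric.infDist p (graphF d f R) = δ }

/-- The open two-sided cone with vertex `p` and slope `Λ`:
`𝒞_p = p + {(x,y) : |y| > Λ|x|}`. -/
def twoSidedCone (d : ℕ) (Λ : ℝ) (p : Pt d) : Set (Pt d) :=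
  { q | Λ * ‖fstPt d q - fstPt d p‖ < |sndPt d q - sndPt d p| }

lemma fstPt_toPt (d : ℕ) (x : Euc (d - 1)) (y : ℝ) : fstPt d (toPt d x y) = x := rfl

lemma sndPt_toPt (d : ℕ) (x : Euc (d - 1)) (y : ℝ) : sndPt d (toPt d x y) = y := rfl

lemma toPt_eta (d : ℕ) (u : Pt d) : toPt d (fstPt d u) (sndPt d u) = u := rfl

lemma dist_sq_pt (d : ℕ) (u v : Pt d) :
    dist u v ^ 2 = ‖fstPt d u - fstPt d v‖ ^ 2 + (sndPt d u - sndPt d v) ^ 2 := by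
  rw [WithLp.prod_dist_eq_of_L2, Real.sq_sqrt (by positivity)]
  rw [dist_eq_norm, Real.dist_eq, sq_abs]
  rfl

lemma dist_sq_toPt (d : ℕ) (x : Euc (d - 1)) (y : ℝ) (x' : Euc (d - 1)) (y' : ℝ) :
    dist (toPt d x y) (toPt d x' y') ^ 2 = ‖x - x'‖ ^ 2 + (y - y') ^ 2 :=
  dist_sq_pt d (toPt d x y) (toPt d x' y')

/-- From `a² ≤ b²` with `a, b > 0`, conclude `a ≤ b`. -/
lemma sq_le_imp_le (a b : ℝ) (ha : 0 < a) (hb : 0 < b) (h : a ^ 2 ≤ b ^ 2) : a ≤ b := by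
  nlinarith

/-- Abstract "band" lemma: a continuous function that satisfies a circle-exclusion
constraint and is at least `δ` at the right endpoint stays on the upper branch. -/
lemma band_abstract (G : ℝ → ℝ) (L δ : ℝ) (hδ : 0 < δ) (hL : 0 ≤ L)
    (hcont : ContinuousOn G (Set.Icc 0 1))
    (hC : ∀ θ, θ ∈ Set.Icc (0:ℝ) 1 → δ ^ 2 ≤ ((1 - θ) * L) ^ 2 + (G θ) ^ 2)
    (hG1 : δ ≤ G 1)
    (θ₀ : ℝ) (hθ₀ : θ₀ ∈ Set.Icc (0:ℝ) 1) (hband : (1 - θ₀) * L < δ) :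
    Real.sqrt (δ ^ 2 - ((1 - θ₀) * L) ^ 2) ≤ G θ₀ := by
  set m := (1 - θ₀) * L with hm
  have hm0 : 0 ≤ m := mul_nonneg (by linarith [hθ₀.2]) hL
  by_contra hlt
  push_neg at hlt
  have hsqpos : 0 < δ ^ 2 - m ^ 2 := by nlinarith
  have hψpos : 0 < Real.sqrt (δ ^ 2 - m ^ 2) := Real.sqrt_pos.mpr hsqpos
  have hψsq : (Real.sqrt (δ ^ 2 - m ^ 2)) ^ 2 = δ ^ 2 - m ^ 2 := Real.sq_sqrt hsqpos.le
  have hGneg : G θ₀ < 0 := by nlinarith [hC θ₀ hθ₀]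
  obtain ⟨θ₂, hθ₂mem, hθ₂⟩ : ∃ θ₂ ∈ Set.Icc θ₀ 1, G θ₂ = 0 := by
    have hsub := intermediate_value_Icc hθ₀.2 (hcont.mono (Set.Icc_subset_Icc hθ₀.1 le_rfl))
    exact hsub ⟨hGneg.le, by linarith⟩
  have hθ₂1 : θ₂ ∈ Set.Icc (0:ℝ) 1 := ⟨le_trans hθ₀.1 hθ₂mem.1, hθ₂mem.2⟩
  have h2 := hC θ₂ hθ₂1
  rw [hθ₂] at h2
  have hle : (1 - θ₂) * L ≤ m := by
    have h3 : 1 - θ₂ ≤ 1 - θ₀ := by linarith [hθ₂mem.1]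
    exact mul_le_mul_of_nonneg_right h3 hL
  nlinarith [mul_nonneg (by linarith [hθ₂mem.2] : (0:ℝ) ≤ 1 - θ₂) hL]

lemma sqrt_helper (Λ δ N : ℝ) (hN0 : 0 < N) (hN2 : N ^ 2 = 1 + Λ ^ 2) (hδ : 0 ≤ δ) :
    Real.sqrt (δ ^ 2 - (Λ * δ / N) ^ 2) = δ / N := by
  have h1 : δ ^ 2 - (Λ * δ / N) ^ 2 = (δ / N) ^ 2 := by
    field_simp
    linear_combination δ ^ 2 * hN2
  rw [h1, Real.sqrt_sq (by positivity)]

lemma case1_helper (Λ N δ ε c s t L b B : ℝ)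
    (hΛ : 0 ≤ Λ) (hN2 : N ^ 2 = 1 + Λ ^ 2) (hN0 : 0 < N)
    (hδ : 0 < δ) (hε0 : 0 < ε) (hεN : N * ε ≤ c / 4)
    (hc : c = s - Λ * t) (hc0 : 0 < c) (ht0 : 0 ≤ t) (hb0 : 0 ≤ b)
    (hband : δ / N ≤ (B - s) + Λ * (L - Λ * δ / N))
    (hLbt : L ≤ b + t)
    (hF1 : b ^ 2 + B ^ 2 < (δ + ε) ^ 2) : False := by
  have h1 : δ / N + Λ * (Λ * δ / N) = δ * N := by
    field_simp
    linear_combination (-1 : ℝ) * hN2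
  have hBB : s - Λ * L + δ * N ≤ B := by linarith [hband, h1]
  have h6 : Λ * L ≤ Λ * (b + t) := mul_le_mul_of_nonneg_left hLbt hΛ
  have hposs : 0 < Λ * b + B := by nlinarith [mul_pos hδ hN0]
  have hδε : 0 < δ + ε := by linarith
  have hCS : (Λ * b + B) ^ 2 ≤ N ^ 2 * (b ^ 2 + B ^ 2) := by
    nlinarith [sq_nonneg (b - Λ * B)]
  have hF1' : N ^ 2 * (b ^ 2 + B ^ 2) < N ^ 2 * ((δ + ε) ^ 2) :=
    mul_lt_mul_of_pos_left hF1 (by positivity)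
  have hsq : (Λ * b + B) ^ 2 < (N * (δ + ε)) ^ 2 := by nlinarith
  have hfin : Λ * b + B < N * (δ + ε) := by
    nlinarith [hsq, hposs, mul_pos hN0 hδε]
  nlinarith [hfin, hBB, h6, hεN, hc0]

lemma case2b_helper (Λ δ ε c s t L b B : ℝ)
    (hΛ : 0 ≤ Λ) (hδ : 0 < δ) (hε0 : 0 < ε) (hεc : ε ≤ c / 4)
    (hc : c = s - Λ * t) (hc0 : 0 < c) (hb0 : 0 ≤ b)
    (hF4 : δ + s - Λ * L ≤ B) (h2b : L < t)
    (hF1 : b ^ 2 + B ^ 2 < (δ + ε) ^ 2) : False := by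
  have h6 : Λ * L ≤ Λ * t := mul_le_mul_of_nonneg_left h2b.le hΛ
  have hBlow : δ + c ≤ B := by rw [hc]; linarith
  have hδε : 0 < δ + ε := by linarith
  have hBup : B < δ + ε := by nlinarith [hF1, sq_nonneg b]
  linarith

set_option maxHeartbeats 1000000 in
lemma case2a_helper (Λ N δ ε c s t L b B W : ℝ)
    (hΛ : 0 ≤ Λ) (hN2 : N ^ 2 = 1 + Λ ^ 2) (hN0 : 0 < N)
    (hδ : 0 < δ) (hε0 : 0 < ε) (hεN : N * ε ≤ c / 4) (hεδ : ε ≤ δ)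
    (hc : c = s - Λ * t) (hc0 : 0 < c) (ht0 : 0 ≤ t) (hb0 : 0 ≤ b) (hL0 : 0 ≤ L)
    (hs0 : 0 < s) (hW0 : 0 ≤ W) (hW2 : W ^ 2 = δ ^ 2 - L ^ 2)
    (hBW : s + W ≤ B) (hcase : N * L ≤ Λ * δ) (h2a : t ≤ L) (hLbt : L ≤ b + t)
    (hF1 : b ^ 2 + B ^ 2 < (δ + ε) ^ 2) : False := by
  have h7 : (N * L) ^ 2 ≤ (Λ * δ) ^ 2 :=
    pow_le_pow_left₀ (mul_nonneg hN0.le hL0) hcase 2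
  have h7b : δ ^ 2 ≤ (N * W) ^ 2 := by
    rw [mul_pow, hW2]
    nlinarith [h7, sq_nonneg δ]
  have hNW : δ ≤ N * W := by
    nlinarith [h7b, mul_nonneg hN0.le hW0, hδ]
  have hbL : L - t ≤ b := by linarith
  have hLt0 : 0 ≤ L - t := by linarith
  have hB0 : 0 ≤ B := by linarith
  have hk1 : (L - t) ^ 2 ≤ b ^ 2 := pow_le_pow_left₀ hLt0 hbL 2
  have hk2 : (s + W) ^ 2 ≤ B ^ 2 := pow_le_pow_left₀ (by linarith) hBW 2
  have h8 : t ^ 2 + s ^ 2 - 2 * L * t + 2 * s * W < 2 * δ * ε + ε ^ 2 := by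
    nlinarith [hk1, hk2, hF1, hW2]
  have h9 : t * (N * L) ≤ t * (Λ * δ) := mul_le_mul_of_nonneg_left hcase ht0
  have h10 : s * δ ≤ s * (N * W) := mul_le_mul_of_nonneg_left hNW hs0.le
  have h11 : N * (t ^ 2 + s ^ 2 - 2 * L * t + 2 * s * W) < N * (2 * δ * ε + ε ^ 2) :=
    mul_lt_mul_of_pos_left h8 hN0
  have h12 : 0 ≤ N * (t ^ 2 + s ^ 2) := by positivity
  have h13 : 2 * δ * c ≤ N * (t ^ 2 + s ^ 2 - 2 * L * t + 2 * s * W) := by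
    rw [hc]; nlinarith [h9, h10, h12]
  have h14 : ε * (N * ε) ≤ δ * (c / 4) :=
    mul_le_mul hεδ hεN (by positivity) hδ.le
  have h15 : 2 * δ * (N * ε) ≤ 2 * δ * (c / 4) :=
    mul_le_mul_of_nonneg_left hεN (by positivity)
  nlinarith [h11, h13, h14, h15, mul_pos hδ hc0]

set_option maxHeartbeats 2000000 in
/-- The key quantitative lemma: two points of `G(δ)` cannot see each other within the
*upward open* cone of slope `Λ`. -/
lemma key_lemma (d : ℕ) (Λ R r : ℝ) (hΛ : 0 ≤ Λ) (hr : 0 < r) (hrR : r < R)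
    (f : Euc (d - 1) → ℝ)
    (hf : LipschitzOnWith Λ.toNNReal f (Metric.ball (0 : Euc (d - 1)) R))
    (δ : ℝ) (hδ : 0 < δ) (p q : Pt d)
    (hp : p ∈ GSet d f R r δ) (hq : q ∈ GSet d f R r δ)
    (hcone : Λ * ‖fstPt d q - fstPt d p‖ < sndPt d q - sndPt d p) : False := by
  obtain ⟨xp, yp, rfl⟩ : ∃ x y, p = toPt d x y := ⟨_, _, (toPt_eta d p).symm⟩
  obtain ⟨xq, yq, rfl⟩ : ∃ x y, q = toPt d x y := ⟨_, _, (toPt_eta d q).symm⟩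
  simp only [GSet, Set.mem_setOf_eq, fstPt_toPt, sndPt_toPt] at hp hq hcone
  obtain ⟨hpr, hpab, hpd⟩ := hp
  obtain ⟨hqr, hqab, hqd⟩ := hq
  have hxpR : xp ∈ ball (0 : Euc (d - 1)) R := ball_subset_ball hrR.le hpr
  have hxqR : xq ∈ ball (0 : Euc (d - 1)) R := ball_subset_ball hrR.le hqr
  set t := ‖xq - xp‖ with ht_def
  set s := yq - yp with hs_def
  have ht0 : 0 ≤ t := norm_nonneg _
  have hs0 : 0 < s := lt_of_le_of_lt (by positivity) hcone
  set c := s - Λ * t with hc_def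
  have hc0 : 0 < c := by rw [hc_def]; linarith only [hcone]
  -- Lipschitz estimate in a convenient form
  have hlip : ∀ a ∈ ball (0 : Euc (d - 1)) R, ∀ b ∈ ball (0 : Euc (d - 1)) R,
      |f a - f b| ≤ Λ * ‖a - b‖ := by
    intro a ha b hb
    have h := (lipschitzOnWith_iff_dist_le_mul.mp hf) a ha b hb
    rwa [Real.dist_eq, dist_eq_norm, Real.coe_toNNReal Λ hΛ] at h
  -- lower bound facts from p's level-set property
  have hlow_p : ∀ x ∈ ball (0 : Euc (d - 1)) R, δ ≤ dist (toPt d xp yp) (toPt d x (f x)) := by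
    intro x hx
    rw [← hpd]
    exact Metric.infDist_le_dist_of_mem ⟨x, hx, rfl⟩
  -- vertical gap of p over its own base point
  have hgap_p : δ ≤ yp - f xp := by
    have h1 := hlow_p xp hxpR
    have h2 := dist_sq_toPt d xp yp xp (f xp)
    rw [sub_self, norm_zero] at h2
    have h3 : δ ^ 2 ≤ dist (toPt d xp yp) (toPt d xp (f xp)) ^ 2 :=
      pow_le_pow_left₀ hδ.le h1 2
    rw [h2] at h3
    have h4 : (0:ℝ) ^ 2 + (yp - f xp) ^ 2 = (yp - f xp) ^ 2 := by ring
    rw [h4] at h3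
    exact sq_le_imp_le δ (yp - f xp) hδ (by linarith only [hpab]) h3
  -- the constant N = √(1+Λ²) and the tolerance ε
  set N := Real.sqrt (1 + Λ ^ 2) with hN_def
  have hN2 : N ^ 2 = 1 + Λ ^ 2 := Real.sq_sqrt (by positivity)
  have hN0 : 0 < N := Real.sqrt_pos.mpr (by positivity)
  have hN1 : 1 ≤ N := by
    have h1 : Real.sqrt 1 ≤ N := by
      rw [hN_def]
      exact Real.sqrt_le_sqrt (by nlinarith [sq_nonneg Λ])
    simpa using h1
  have hΛN : Λ < N := by
    rw [hN_def]
    exact (Real.lt_sqrt hΛ).mpr (by linarith only [])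
  set ε := min (c / (4 * N)) δ with hε_def
  have hε0 : 0 < ε := lt_min (by positivity) hδ
  have hεδ : ε ≤ δ := min_le_right _ _
  have hεN : N * ε ≤ c / 4 := by
    have h1 : ε ≤ c / (4 * N) := min_le_left _ _
    have h2 : N * ε ≤ N * (c / (4 * N)) := mul_le_mul_of_nonneg_left h1 hN0.le
    calc N * ε ≤ N * (c / (4 * N)) := h2
      _ = c / 4 := by field_simp
  have hεc : ε ≤ c / 4 :=
    le_trans (le_mul_of_one_le_left hε0.le hN1) hεN
  -- a near-minimizer for q
  have hne : (graphF d f R).Nonempty := ⟨toPt d xp (f xp), ⟨xp, hxpR, rfl⟩⟩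
  have hltq : Metric.infDist (toPt d xq yq) (graphF d f R) < δ + ε := by
    rw [hqd]; linarith only [hε0]
  obtain ⟨z, hzF, hzd⟩ := (Metric.infDist_lt_iff hne).mp hltq
  obtain ⟨w, hwR, rfl⟩ := hzF
  set b := ‖xq - w‖ with hb_def
  set B := yq - f w with hB_def
  set L := ‖xp - w‖ with hL_def
  have hb0 : 0 ≤ b := norm_nonneg _
  have hL0 : 0 ≤ L := norm_nonneg _
  have hδε : 0 < δ + ε := by linarith only [hδ, hε0]
  have hF1 : b ^ 2 + B ^ 2 < (δ + ε) ^ 2 := by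
    have h1 := dist_sq_toPt d xq yq w (f w)
    rw [← hb_def, ← hB_def] at h1
    have h2 : dist (toPt d xq yq) (toPt d w (f w)) ^ 2 < (δ + ε) ^ 2 := by
      apply pow_lt_pow_left₀ hzd dist_nonneg
      norm_num
    rw [h1] at h2
    exact h2
  have hLbt : L ≤ b + t := by
    have h1 : xp - w = (xp - xq) + (xq - w) := by abel
    calc L = ‖(xp - xq) + (xq - w)‖ := by rw [hL_def, h1]
      _ ≤ ‖xp - xq‖ + ‖xq - w‖ := norm_add_le _ _
      _ = t + b := by rw [norm_sub_rev]
      _ = b + t := by ring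
  -- the transferred gap estimate (F4): B ≥ δ + s - Λ L
  have hF4 : δ + s - Λ * L ≤ B := by
    have h1 := hlip xp hxpR w hwR
    have h4 : f w - f xp ≤ Λ * L := by
      calc f w - f xp ≤ |f w - f xp| := le_abs_self _
        _ = |f xp - f w| := abs_sub_comm _ _
        _ ≤ Λ * L := h1
    rw [hB_def, hs_def]
    linarith only [hgap_p, h4]
  -- the path from w to xp and the band function G
  set g : ℝ → Euc (d - 1) := fun θ => w + θ • (xp - w) with hg_def
  have hgmem : ∀ θ ∈ Set.Icc (0:ℝ) 1, g θ ∈ ball (0 : Euc (d - 1)) R := by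
    intro θ hθ
    have hcomb : g θ = (1 - θ) • w + θ • xp := by
      simp only [hg_def]
      module
    rw [hcomb]
    exact (convex_ball (0 : Euc (d - 1)) R) hwR hxpR (by linarith [hθ.2]) hθ.1 (by ring)
  have hgnorm1 : ∀ θ : ℝ, θ ≤ 1 → ‖xp - g θ‖ = (1 - θ) * L := by
    intro θ hθ
    have h1 : xp - g θ = (1 - θ) • (xp - w) := by
      simp only [hg_def]
      module
    rw [h1, norm_smul, Real.norm_eq_abs, abs_of_nonneg (by linarith), ← hL_def]
  have hgnorm2 : ∀ θ : ℝ, 0 ≤ θ → ‖g θ - w‖ = θ * L := by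
    intro θ hθ
    have h1 : g θ - w = θ • (xp - w) := by
      simp only [hg_def]
      module
    rw [h1, norm_smul, Real.norm_eq_abs, abs_of_nonneg hθ, ← hL_def]
  set G : ℝ → ℝ := fun θ => yp - f (g θ) with hG_def
  have hcont : ContinuousOn G (Set.Icc 0 1) := by
    apply continuousOn_const.sub
    apply hf.continuousOn.comp
    · exact (Continuous.continuousOn (by fun_prop))
    · exact hgmem
  have hC : ∀ θ, θ ∈ Set.Icc (0:ℝ) 1 → δ ^ 2 ≤ ((1 - θ) * L) ^ 2 + (G θ) ^ 2 := by
    intro θ hθ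
    have h1 := hlow_p (g θ) (hgmem θ hθ)
    have h2 := dist_sq_toPt d xp yp (g θ) (f (g θ))
    rw [hgnorm1 θ hθ.2] at h2
    have h3 : G θ = yp - f (g θ) := rfl
    rw [h3]
    have h4 : δ ^ 2 ≤ dist (toPt d xp yp) (toPt d (g θ) (f (g θ))) ^ 2 :=
      pow_le_pow_left₀ hδ.le h1 2
    rw [h2] at h4
    exact h4
  have hG1 : δ ≤ G 1 := by
    have h1 : g 1 = xp := by
      simp only [hg_def]
      module
    have h2 : G 1 = yp - f (g 1) := rfl
    rw [h2, h1]
    exact hgap_p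
  -- the band estimate in usable form
  have hbanduse : ∀ m : ℝ, 0 ≤ m → m ≤ L → m < δ →
      Real.sqrt (δ ^ 2 - m ^ 2) ≤ (B - s) + Λ * (L - m) := by
    intro m hm0 hmL hmδ
    by_cases hLz : L = 0
    · have hmz : m = 0 := le_antisymm (hLz ▸ hmL) hm0
      subst hmz
      rw [show δ ^ 2 - (0:ℝ) ^ 2 = δ ^ 2 by ring, Real.sqrt_sq hδ.le]
      have h5 := hF4
      rw [hLz] at h5
      have h7 : Λ * (L - 0) = 0 := by rw [hLz]; ring
      linarith only [h5, h7]
    · have hLpos : 0 < L := lt_of_le_of_ne hL0 (Ne.symm hLz)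
      set θ₀ := 1 - m / L with hθ₀_def
      have hθ₀mem : θ₀ ∈ Set.Icc (0:ℝ) 1 := by
        constructor
        · rw [hθ₀_def]
          have h1 := (div_le_one hLpos).mpr hmL
          linarith only [h1]
        · rw [hθ₀_def]
          have h1 := div_nonneg hm0 hL0
          linarith only [h1]
      have hθ₀L : (1 - θ₀) * L = m := by
        rw [hθ₀_def]
        field_simp
        ring
      have hb2 := band_abstract G L δ hδ hL0 hcont hC hG1 θ₀ hθ₀mem (by rw [hθ₀L]; exact hmδ)
      rw [hθ₀L] at hb2
      have h3 : θ₀ * L = L - m := by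
        rw [hθ₀_def]
        field_simp
      have hup : G θ₀ ≤ (B - s) + Λ * (L - m) := by
        have h1 := hlip (g θ₀) (hgmem θ₀ hθ₀mem) w hwR
        rw [hgnorm2 θ₀ hθ₀mem.1, h3] at h1
        have h4 : f w - f (g θ₀) ≤ |f (g θ₀) - f w| := by
          rw [abs_sub_comm]
          exact le_abs_self _
        have h5 : G θ₀ = yp - f (g θ₀) := rfl
        have h6 : B - s = yp - f w := by rw [hB_def, hs_def]; ring
        rw [h5, h6]
        linarith only [h1, h4]
      linarith only [hb2, hup]
  -- final case analysis
  rcases le_or_gt (Λ * δ) (N * L) with hcase | hcase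
  · -- Case 1 : L is large; use the optimal band point m = Λδ/N
    have hm0 : 0 ≤ Λ * δ / N := by positivity
    have hmL : Λ * δ / N ≤ L := by
      rw [div_le_iff₀ hN0]
      calc Λ * δ ≤ N * L := hcase
        _ = L * N := mul_comm N L
    have hmδ : Λ * δ / N < δ := by
      rw [div_lt_iff₀ hN0]
      have h1 := mul_lt_mul_of_pos_right hΛN hδ
      linarith only [h1]
    have hband := hbanduse (Λ * δ / N) hm0 hmL hmδ
    rw [sqrt_helper Λ δ N hN0 hN2 hδ.le] at hband
    exact case1_helper Λ N δ ε c s t L b B hΛ hN2 hN0 hδ hε0 hεN hc_def hc0 ht0 hb0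
      hband hLbt hF1
  · -- Case 2 : L is small
    rcases lt_or_ge L t with h2b | h2a
    · exact case2b_helper Λ δ ε c s t L b B hΛ hδ hε0 hεc hc_def hc0 hb0 hF4 h2b hF1
    · -- Subcase 2a : t ≤ L ; use the band point m = L
      have hLδ : L < δ := by
        have h1 := hcase.trans (mul_lt_mul_of_pos_right hΛN hδ)
        exact lt_of_mul_lt_mul_left h1 hN0.le
      have hL2δ : L ^ 2 ≤ δ ^ 2 := pow_le_pow_left₀ hL0 hLδ.le 2
      have hW0 : 0 ≤ Real.sqrt (δ ^ 2 - L ^ 2) := Real.sqrt_nonneg _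
      have hW2 : (Real.sqrt (δ ^ 2 - L ^ 2)) ^ 2 = δ ^ 2 - L ^ 2 :=
        Real.sq_sqrt (by linarith only [hL2δ])
      have hband := hbanduse L hL0 le_rfl hLδ
      have hBW : s + Real.sqrt (δ ^ 2 - L ^ 2) ≤ B := by
        have h0 : Λ * (L - L) = 0 := by ring
        linarith only [hband, h0]
      exact case2a_helper Λ N δ ε c s t L b B (Real.sqrt (δ ^ 2 - L ^ 2))
        hΛ hN2 hN0 hδ hε0 hεN hεδ hc_def hc0 ht0 hb0 hL0 hs0 hW0 hW2 hBW hcase.le h2a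
        hLbt hF1

/-- If `p ∈ G(δ)`, then the open two-sided cone with vertex `p` is
disjoint from `G(δ)`. -/
theorem cone_disjoint_level_set
    (d : ℕ) (hd : 2 ≤ d) (Λ R r : ℝ) (hΛ : 0 ≤ Λ)
    (hr : 0 < r) (hrR : r < R)
    (f : Euc (d - 1) → ℝ)
    (hf : LipschitzOnWith Λ.toNNReal f (Metric.ball (0 : Euc (d - 1)) R))
    (δ : ℝ) (hδ : 0 < δ)
    (p : Pt d) (hp : p ∈ GSet d f R r δ) :
    twoSidedCone d Λ p ∩ GSet d f R r δ = ∅ := by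
  rw [Set.eq_empty_iff_forall_notMem]
  rintro q ⟨hqc, hqG⟩
  have hcone : Λ * ‖fstPt d q - fstPt d p‖ < |sndPt d q - sndPt d p| := hqc
  rcases lt_abs.mp hcone with h | h
  · exact key_lemma d Λ R r hΛ hr hrR f hf δ hδ p q hp hqG h
  · have h' : Λ * ‖fstPt d p - fstPt d q‖ < sndPt d p - sndPt d q := by
      rw [norm_sub_rev]
      linarith
    exact key_lemma d Λ R r hΛ hr hrR f hf δ hδ q p hqG hp h'
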